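/- arXiv:1606.01778 — 2 statements merged into one kernel-verified Lean document; each statement's English description precedes it below -/
import Mathlib

section
/- Let p(Y) = Y² − 1968·Y + 2654208 and q(Y) = 2·Y²·(Y − 1728)². Then the polynomial F*(Y₀, Y₁, Y₂, Y₃) = q(Y₀)·Y₁·Y₃ − (3/2)·q(Y₀)·Y₂² + p(Y₀)·Y₁⁴ is irreducible in the polynomial ring ℂ[Y₀, Y₁, Y₂, Y₃]. -/
open MvPolynomial

noncomputable def Statement4.aP : MvPolynomial (Fin 3) ℂ :=
  2 * X 2 ^ 2 * (X 2 - 1728) ^ 2 * X 0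

noncomputable def Statement4.bP : MvPolynomial (Fin 3) ℂ :=
  -3 * (X 2 ^ 2 * (X 2 - 1728) ^ 2 * X 1 ^ 2) + (X 2 ^ 2 - 1968 * X 2 + 2654208) * X 0 ^ 4

namespace Statement4

lemma prime_X0 : Prime (X 0 : MvPolynomial (Fin 3) ℂ) := by
  rw [← MulEquiv.prime_iff (finSuccEquiv ℂ 2).toMulEquiv]
  have h : (finSuccEquiv ℂ 2).toMulEquiv (X 0 : MvPolynomial (Fin 3) ℂ) = Polynomial.X := by
    simp [finSuccEquiv_X_zero]
  rw [h]; exact Polynomial.prime_X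

lemma aP_ne_zero : aP ≠ 0 := by
  intro h
  have h2 := congrArg (eval (![1, 1, 1] : Fin 3 → ℂ)) h
  simp [aP] at h2
  norm_num at h2

lemma X0_not_dvd_bP : ¬ (X 0 : MvPolynomial (Fin 3) ℂ) ∣ bP := by
  intro h
  have h2 := map_dvd (eval (![0, 1, 1] : Fin 3 → ℂ)) h
  simp [bP] at h2
  norm_num at h2

lemma key_dvd (c : MvPolynomial (Fin 3) ℂ) (ha : c ∣ aP) (hb : c ∣ bP) : IsUnit c := by
  have h1 : c ∣ 2 * (X 2 ^ 2 - 1968 * X 2 + 2654208) * X 0 ^ 5 := by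
    have h := dvd_add (hb.mul_left (2 * X 0)) (ha.mul_left (3 * X 1 ^ 2))
    convert h using 1
    rw [aP, bP]; ring
  have h2 : c ∣ (2 * X 2 ^ 2 * (X 2 - 1728) ^ 2) * X 0 ^ 5 := by
    have h := ha.mul_left (X 0 ^ 4)
    convert h using 1
    rw [aP]; ring
  have h3 : c ∣ (638959998741245853696 : MvPolynomial (Fin 3) ℂ) * X 0 ^ 5 := by
    have h := dvd_add
      (h1.mul_left (120367356051456 + 89248075776 * X 2 - 26047872 * X 2 ^ 2 - 10495 * X 2 ^ 3))
      (h2.mul_left (41664432 + 10495 * X 2))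
    convert h using 1
    ring
  have hu2 : IsUnit ((638959998741245853696 : MvPolynomial (Fin 3) ℂ)) := by
    rw [show ((638959998741245853696 : MvPolynomial (Fin 3) ℂ)) = C (638959998741245853696 : ℂ)
      from (map_ofNat C 638959998741245853696).symm]
    exact (isUnit_iff_ne_zero.mpr (by norm_num)).map C
  have h4 : c ∣ (X 0 : MvPolynomial (Fin 3) ℂ) ^ 5 := (hu2.dvd_mul_left).mp h3
  by_contra hc
  obtain ⟨i, _, hi⟩ := (dvd_prime_pow prime_X0 5).mp h4
  match i with
  | 0 =>
    rw [pow_zero] at hi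
    exact hc (associated_one_iff_isUnit.mp hi)
  | (k + 1) =>
    have hd : (X 0 : MvPolynomial (Fin 3) ℂ) ∣ c :=
      dvd_trans (dvd_pow_self _ (Nat.succ_ne_zero k)) hi.symm.dvd
    exact X0_not_dvd_bP (hd.trans hb)

lemma irr_lin : Irreducible (Polynomial.C aP * Polynomial.X + Polynomial.C bP) := by
  constructor
  · intro h
    have hd := Polynomial.natDegree_eq_zero_of_isUnit h
    rw [Polynomial.natDegree_linear aP_ne_zero] at hd
    exact one_ne_zero hd
  · intro g h hgh
    have hG : Polynomial.C aP * Polynomial.X + Polynomial.C bP ≠ 0 := by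
      intro h0
      apply aP_ne_zero
      have := congrArg (fun p => Polynomial.coeff p 1) h0
      simpa using this
    have hg0 : g ≠ 0 := by rintro rfl; simp at hgh; exact hG hgh
    have hh0 : h ≠ 0 := by rintro rfl; simp at hgh; exact hG hgh
    have hdeg : g.natDegree + h.natDegree = 1 := by
      rw [← Polynomial.natDegree_mul hg0 hh0, ← hgh, Polynomial.natDegree_linear aP_ne_zero]
    have key : ∀ f : Polynomial (MvPolynomial (Fin 3) ℂ),
        f.natDegree = 0 → f ∣ Polynomial.C aP * Polynomial.X + Polynomial.C bP → IsUnit f := by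
      intro f hf hdvd
      have hfC : f = Polynomial.C (f.coeff 0) := Polynomial.eq_C_of_natDegree_eq_zero hf
      rw [hfC] at hdvd ⊢
      have hco := (Polynomial.C_dvd_iff_dvd_coeff _ _).mp hdvd
      have hca : f.coeff 0 ∣ aP := by have := hco 1; simpa using this
      have hcb : f.coeff 0 ∣ bP := by have := hco 0; simpa using this
      exact (key_dvd _ hca hcb).map Polynomial.C
    rcases Nat.eq_zero_or_pos g.natDegree with hg | hg
    · exact Or.inl (key g hg ⟨h, hgh⟩)
    · have hh : h.natDegree = 0 := by omega
      exact Or.inr (key h hh ⟨g, by rw [hgh]; ring⟩)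

lemma image_eq :
    (finSuccEquiv ℂ 3) ((renameEquiv ℂ (Equiv.swap (0 : Fin 4) 3))
      ((2 * X 0 ^ 2 * (X 0 - 1728) ^ 2) * X 1 * X 3
        - 3 * (X 0 ^ 2 * (X 0 - 1728) ^ 2 * X 2 ^ 2)
        + (X 0 ^ 2 - 1968 * X 0 + 2654208) * X 1 ^ 4)) =
    Polynomial.C aP * Polynomial.X + Polynomial.C bP := by
  have e0 : (finSuccEquiv ℂ 3) (X (0 : Fin 4)) = Polynomial.X := finSuccEquiv_X_zero
  have e1 : (finSuccEquiv ℂ 3) (X (1 : Fin 4)) = Polynomial.C (X 0) := by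
    rw [show (1 : Fin 4) = Fin.succ 0 from rfl, finSuccEquiv_X_succ]
  have e2 : (finSuccEquiv ℂ 3) (X (2 : Fin 4)) = Polynomial.C (X 1) := by
    rw [show (2 : Fin 4) = Fin.succ 1 from rfl, finSuccEquiv_X_succ]
  have e3 : (finSuccEquiv ℂ 3) (X (3 : Fin 4)) = Polynomial.C (X 2) := by
    rw [show (3 : Fin 4) = Fin.succ 2 from rfl, finSuccEquiv_X_succ]
  have s0 : (Equiv.swap (0 : Fin 4) 3) 0 = 3 := by decide
  have s1 : (Equiv.swap (0 : Fin 4) 3) 1 = 1 := by decide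
  have s2 : (Equiv.swap (0 : Fin 4) 3) 2 = 2 := by decide
  have s3 : (Equiv.swap (0 : Fin 4) 3) 3 = 0 := by decide
  simp only [renameEquiv_apply, map_add, map_sub, map_mul, map_pow, map_ofNat, rename_X,
    s0, s1, s2, s3, e0, e1, e2, e3, aP, bP, map_neg]
  ring

end Statement4

/-- With `p(Y) = Y² − 1968Y + 2654208` and `q(Y) = 2Y²(Y − 1728)²`, the polynomial
`F*(Y₀, Y₁, Y₂, Y₃) = q(Y₀)·Y₁·Y₃ − (3/2)·q(Y₀)·Y₂² + p(Y₀)·Y₁⁴` (obtained by clearing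
denominators in the Schwarzian differential equation of the modular `j`-function) is
irreducible in `ℂ[Y₀, Y₁, Y₂, Y₃]`. -/
theorem statement4 :
    Irreducible
      ((C (2 : ℂ) * X 0 ^ 2 * (X 0 - C 1728) ^ 2) * X 1 * X 3
        - C (3 / 2 : ℂ) * ((C 2 * X 0 ^ 2 * (X 0 - C 1728) ^ 2) * X 2 ^ 2)
        + (X 0 ^ 2 - C 1968 * X 0 + C 2654208) * X 1 ^ 4 :
        MvPolynomial (Fin 4) ℂ) := by
  have h32 : (C (3 / 2 : ℂ) : MvPolynomial (Fin 4) ℂ) * 2 = 3 := by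
    rw [show ((2 : MvPolynomial (Fin 4) ℂ)) = C (2 : ℂ) from (map_ofNat C 2).symm,
      show ((3 : MvPolynomial (Fin 4) ℂ)) = C (3 : ℂ) from (map_ofNat C 3).symm, ← C_mul]
    norm_num
  have hFeq :
      ((C (2 : ℂ) * X 0 ^ 2 * (X 0 - C 1728) ^ 2) * X 1 * X 3
        - C (3 / 2 : ℂ) * ((C 2 * X 0 ^ 2 * (X 0 - C 1728) ^ 2) * X 2 ^ 2)
        + (X 0 ^ 2 - C 1968 * X 0 + C 2654208) * X 1 ^ 4 :
        MvPolynomial (Fin 4) ℂ) =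
      (2 * X 0 ^ 2 * (X 0 - 1728) ^ 2) * X 1 * X 3
        - 3 * (X 0 ^ 2 * (X 0 - 1728) ^ 2 * X 2 ^ 2)
        + (X 0 ^ 2 - 1968 * X 0 + 2654208) * X 1 ^ 4 := by
    simp only [map_ofNat]
    linear_combination (-(X 0 ^ 2 * (X 0 - 1728) ^ 2 * X 2 ^ 2) : MvPolynomial (Fin 4) ℂ) * h32
  rw [hFeq]
  rw [← MulEquiv.irreducible_iff (renameEquiv ℂ (Equiv.swap (0 : Fin 4) 3))]
  rw [← MulEquiv.irreducible_iff (finSuccEquiv ℂ 3)]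
  rw [Statement4.image_eq]
  exact Statement4.irr_lin
end

section
/- Let p(Y) be a polynomial with coefficients in the subfield C(t) of K generated by C ∪ {t}, let q(Y) be a polynomial with coefficients in C, and let u ∈ K be such that p(u) is nonconstant. Then for every k ≥ 0 the element ∂_{p(u)}^k q(u) lies in the subfield C(t)({u, u', …, u^{(k)}}) of K generated by C ∪ {t, u, u', …, u^{(k)}}. -/
/-- The subfield of constants of a derivation on a field of characteristic zero. -/
def Derivation.constants {K : Type*} [Field K] [CharZero K] (D : Derivation ℚ K K) :
    Subfield K where
  carrier := {x : K | D x = 0}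
  mul_mem' := fun {a b} ha hb => by
    simp only [Set.mem_setOf_eq] at *
    rw [D.leibniz, ha, hb, smul_zero, smul_zero, add_zero]
  one_mem' := D.map_one_eq_zero
  add_mem' := fun {a b} ha hb => by
    simp only [Set.mem_setOf_eq] at *
    rw [map_add, ha, hb, add_zero]
  zero_mem' := D.toLinearMap.map_zero
  neg_mem' := fun {a} ha => by
    simp only [Set.mem_setOf_eq] at *
    rw [map_neg, ha, neg_zero]
  inv_mem' := fun a ha => by
    simp only [Set.mem_setOf_eq] at *
    rw [D.leibniz_inv, ha, smul_zero]

/-- Differentiation with respect to `x`: `∂_x y = y' / x'`. -/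
def pderiv {K : Type*} [Field K] [CharZero K] (D : Derivation ℚ K K) (x : K) : K → K :=
  fun y => D y / D x

lemma deriv_closure_mem {K : Type*} [Field K] [CharZero K] (D : Derivation ℚ K K)
    (F : Subfield K) (S : Set K) (hS : ∀ s ∈ S, s ∈ F ∧ D s ∈ F) :
    ∀ y ∈ Subfield.closure S, y ∈ F ∧ D y ∈ F := by
  intro y hy
  induction hy using Subfield.closure_induction with
  | mem x hx => exact hS x hx
  | one => exact ⟨one_mem F, by simp [F.zero_mem]⟩
  | add x y _ _ hx hy =>
      exact ⟨add_mem hx.1 hy.1, by rw [map_add]; exact add_mem hx.2 hy.2⟩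
  | neg x _ hx => exact ⟨neg_mem hx.1, by rw [map_neg]; exact neg_mem hx.2⟩
  | inv x _ hx =>
      refine ⟨inv_mem hx.1, ?_⟩
      rw [D.leibniz_inv, smul_eq_mul]
      exact mul_mem (neg_mem (pow_mem (inv_mem hx.1) 2)) hx.2
  | mul x y _ _ hx hy =>
      refine ⟨mul_mem hx.1 hy.1, ?_⟩
      rw [D.leibniz, smul_eq_mul, smul_eq_mul]
      exact add_mem (mul_mem hx.1 hy.2) (mul_mem hy.1 hx.2)

/-- If `p(Y)` has coefficients in `C(t)`, `q(Y)` has coefficients in `C`, and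
`p(u)` is nonconstant, then for every `k ≥ 0` the element `∂_{p(u)}^k q(u)` lies in the
subfield `C(t)(u, u', …, u^{(k)})` of `K`. -/
theorem statement7 {K : Type*} [Field K] [CharZero K] (D : Derivation ℚ K K)
    (t : K) (ht : D t = 1)
    (p q : Polynomial K)
    (hp : ∀ i, p.coeff i ∈ Subfield.closure ((D.constants : Set K) ∪ {t}))
    (hq : ∀ i, q.coeff i ∈ D.constants)
    (u : K) (hu : D (Polynomial.eval u p) ≠ 0) :
    ∀ k : ℕ, (pderiv D (Polynomial.eval u p))^[k] (Polynomial.eval u q) ∈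
      Subfield.closure ((D.constants : Set K) ∪ {t} ∪ ((fun j => (⇑D)^[j] u) '' Set.Iic k)) := by
  set S : ℕ → Set K := fun k =>
    (D.constants : Set K) ∪ {t} ∪ ((fun j => (⇑D)^[j] u) '' Set.Iic k) with hSdef
  have hSmono : ∀ m n : ℕ, m ≤ n → S m ⊆ S n := fun m n h =>
    Set.union_subset_union_right _ (Set.image_mono (Set.Iic_subset_Iic.mpr h))
  have hgen : ∀ k : ℕ, ∀ s ∈ S k,
      s ∈ Subfield.closure (S (k+1)) ∧ D s ∈ Subfield.closure (S (k+1)) := by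
    intro k s hs
    rcases hs with (hc | hst) | ⟨j, hj, rfl⟩
    · refine ⟨Subfield.subset_closure (Or.inl (Or.inl hc)), ?_⟩
      have hz : D s = 0 := hc
      rw [hz]; exact zero_mem _
    · rcases hst with rfl
      exact ⟨Subfield.subset_closure (Or.inl (Or.inr rfl)), by rw [ht]; exact one_mem _⟩
    · refine ⟨Subfield.subset_closure (Or.inr ⟨j, le_trans hj (Nat.le_succ k), rfl⟩), ?_⟩
      have hit : D ((⇑D)^[j] u) = (⇑D)^[j+1] u := (Function.iterate_succ_apply' (⇑D) j u).symm
      rw [hit]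
      exact Subfield.subset_closure (Or.inr ⟨j+1, Nat.succ_le_succ hj, rfl⟩)
  have humem : ∀ k, u ∈ Subfield.closure (S k) := fun k =>
    Subfield.subset_closure (Or.inr ⟨0, Nat.zero_le k, rfl⟩)
  have hCt : ∀ k, Subfield.closure ((D.constants : Set K) ∪ {t}) ≤ Subfield.closure (S k) :=
    fun k => Subfield.closure_mono (Set.subset_union_left.trans (hSmono 0 k (Nat.zero_le k)))
  have hpu : ∀ k, Polynomial.eval u p ∈ Subfield.closure (S k) := by
    intro k
    rw [Polynomial.eval_eq_sum_range]
    exact Subfield.sum_mem _ fun i _ => mul_mem (hCt k (hp i)) (pow_mem (humem k) i)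
  intro k
  induction k with
  | zero =>
      rw [Function.iterate_zero_apply, Polynomial.eval_eq_sum_range]
      refine Subfield.sum_mem _ fun i _ => mul_mem ?_ (pow_mem (humem 0) i)
      exact Subfield.subset_closure (Or.inl (Or.inl (hq i)))
  | succ k ih =>
      rw [Function.iterate_succ_apply']
      set y := (pderiv D (Polynomial.eval u p))^[k] (Polynomial.eval u q)
      have hy := deriv_closure_mem D (Subfield.closure (S (k+1))) (S k) (hgen k) y ih
      have hDpu := deriv_closure_mem D (Subfield.closure (S (k+1))) (S k) (hgen k)
        (Polynomial.eval u p) (hpu k)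
      exact div_mem hy.2 hDpu.2
end
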